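/- Let P(x) = x^3 - b x^2 + c x + d with b > 2, d > 0, and P(1) > 0. Then P has exactly one real root in (-∞, 0), and the other two roots (real or complex) lie outside the closed unit disk (modulus > 1, or real and > 1). -/

import Mathlib

lemma quad_root_gt_one (p q x : ℝ) (hp : p < -2) (hq : 0 < q)
    (h1 : 0 < 1 + p + q) (hx : x ^ 2 + p * x + q = 0) : 1 < x := by
  by_contra h
  push_neg at h
  nlinarith [mul_nonneg (sub_nonneg.2 h) (by linarith : (0:ℝ) ≤ -2 - p)]

theorem stmt_13 (b c d : ℝ) (hb : 2 < b) (hd : 0 < d)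
    (h1 : 0 < (1 : ℝ) ^ 3 - b * 1 ^ 2 + c * 1 + d) :
    (∃! x : ℝ, x < 0 ∧ x ^ 3 - b * x ^ 2 + c * x + d = 0) ∧
    (∀ z : ℂ, z ^ 3 - (b : ℂ) * z ^ 2 + (c : ℂ) * z + (d : ℂ) = 0 →
      ¬(z.im = 0 ∧ z.re < 0) → 1 < ‖z‖) := by
  set f : ℝ → ℝ := fun x => x ^ 3 - b * x ^ 2 + c * x + d with hfdef
  have hcont : Continuous f := by fun_prop
  set a : ℝ := -(1 + |c| + |d|) with ha
  have ha1 : a ≤ -1 := by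
    have := abs_nonneg c; have := abs_nonneg d; simp [ha]; linarith
  have hfa : f a < 0 := by
    have h1c : c * a ≤ |c| * (-a) := by
      have : -(c * a) ≥ -(|c| * (-a)) := by
        have := neg_abs_le c; have := le_abs_self c
        nlinarith [abs_nonneg c]
      linarith
    have hha : (1:ℝ) ≤ -a := by linarith
    have h2 : a ^ 3 ≤ -(a^2) := by nlinarith [sq_nonneg a]
    have h3 : |c| * (-a) + |d| ≤ a ^ 2 := by
      have : (|c| + |d|) ≤ -a := by simp [ha]
      nlinarith [abs_nonneg c, abs_nonneg d]
    have hdd : d ≤ |d| := le_abs_self d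
    simp only [hfdef]
    nlinarith [sq_nonneg a]
  have ha0 : a ≤ 0 := by linarith
  have h0mem : (0:ℝ) ∈ Set.Icc (f a) (f 0) := by
    constructor
    · linarith
    · show (0:ℝ) ≤ f 0
      simpa [hfdef] using hd.le
  obtain ⟨l, hlmem, hl⟩ := intermediate_value_Icc ha0 hcont.continuousOn h0mem
  have hlne : l ≠ 0 := by
    intro h; rw [h] at hl; simp [hfdef] at hl; linarith
  have hlneg : l < 0 := lt_of_le_of_ne hlmem.2 hlne
  have hlroot : l ^ 3 - b * l ^ 2 + c * l + d = 0 := hl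
  set p : ℝ := l - b with hp'
  set q : ℝ := l ^ 2 - b * l + c with hq'
  have key : ∀ x : ℝ, x ^ 3 - b * x ^ 2 + c * x + d = (x - l) * (x ^ 2 + p * x + q) := by
    intro x
    simp only [hp', hq']
    linear_combination hlroot
  have hq : 0 < q := by
    have h0 := key 0
    simp at h0
    -- d = -l * q
    nlinarith [h0]
  have hp : p < -2 := by simp only [hp']; linarith
  have h1pq : 0 < 1 + p + q := by
    have hk := key 1
    rw [hk] at h1
    nlinarith [h1]
  constructor
  · refine ⟨l, ⟨hlneg, hlroot⟩, ?_⟩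
    rintro y ⟨hy0, hy⟩
    have := key y
    rw [hy] at this
    rcases mul_eq_zero.1 this.symm with h | h
    · linarith [sub_eq_zero.1 h]
    · have := quad_root_gt_one p q y hp hq h1pq h
      linarith
  · intro z hz hnz
    have hlC : (l:ℂ) ^ 3 - (b:ℂ) * (l:ℂ) ^ 2 + (c:ℂ) * (l:ℂ) + (d:ℂ) = 0 := by
      exact_mod_cast congrArg (Complex.ofReal) hlroot
    have keyC : z ^ 3 - (b:ℂ) * z ^ 2 + (c:ℂ) * z + (d:ℂ)
        = (z - (l:ℂ)) * (z ^ 2 + (p:ℂ) * z + (q:ℂ)) := by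
      simp only [hp', hq']
      push_cast
      linear_combination hlC
    rw [keyC] at hz
    rcases mul_eq_zero.1 hz with h | h
    · exfalso
      apply hnz
      have hzl : z = (l:ℂ) := sub_eq_zero.1 h
      rw [hzl]
      simp [hlneg]
    · -- z^2 + p z + q = 0
      have hre : z.re ^ 2 - z.im ^ 2 + p * z.re + q = 0 := by
        have := congrArg Complex.re h
        simp [pow_two, Complex.mul_re, Complex.add_re] at this
        ring_nf
        ring_nf at this
        linarith
      have him : z.im * (2 * z.re + p) = 0 := by
        have := congrArg Complex.im h
        simp [pow_two, Complex.mul_im] at this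
        ring_nf
        ring_nf at this
        linarith
      rcases mul_eq_zero.1 him with hy | hy
      · have hx : z.re ^ 2 + p * z.re + q = 0 := by
          rw [hy] at hre; linarith [hre]
        have h1x := quad_root_gt_one p q z.re hp hq h1pq hx
        calc (1:ℝ) < z.re := h1x
          _ ≤ |z.re| := le_abs_self _
          _ ≤ ‖z‖ := Complex.abs_re_le_norm z
      · have hx : z.re = -p / 2 := by linarith
        have h1x : 1 < z.re := by rw [hx]; linarith
        calc (1:ℝ) < z.re := h1x
          _ ≤ |z.re| := le_abs_self _
          _ ≤ ‖z‖ := Complex.abs_re_le_norm z
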